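/- Let G = (V,E) be a finite undirected graph, let γ > 0, and let P* be an optimal partition of V for the CPM quality function with resolution parameter γ. Then every community C ∈ P* induces a connected subgraph of G. -/

import Mathlib

open Finset

variable {V : Type*}

/-- `eBetween G S T` is the number of adjacent pairs `(u, v)` with `u ∈ S` and `v ∈ T`.
For disjoint `S` and `T` this is the number of edges between `S` and `T`;
`eBetween G C C / 2` is the number of edges inside `C`. -/
noncomputable def eBetween (G : SimpleGraph V) [DecidableRel G.Adj] (S T : Finset V) : ℝ :=
  ∑ u ∈ S, ∑ v ∈ T, if G.Adj u v then (1 : ℝ) else 0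

/-- The Constant Potts Model quality function with resolution parameter `γ`:
`H(P) = Σ_{C ∈ P} [E(C,C) − γ·|C|(|C|−1)/2]`. -/
noncomputable def cpmQuality (G : SimpleGraph V) [DecidableRel G.Adj] (γ : ℝ)
    (P : Finset (Finset V)) : ℝ :=
  ∑ C ∈ P, (eBetween G C C / 2 - γ * (C.card : ℝ) * ((C.card : ℝ) - 1) / 2)

/-- `P` is a partition of `V` into nonempty communities. -/
def IsPartition [Fintype V] (P : Finset (Finset V)) : Prop :=
  (∀ C ∈ P, C.Nonempty) ∧ ∀ v : V, ∃! C, C ∈ P ∧ v ∈ C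

lemma eBetween_union_self [DecidableEq V] (G : SimpleGraph V) [DecidableRel G.Adj] {S T : Finset V}
    (h : Disjoint S T) :
    eBetween G (S ∪ T) (S ∪ T) =
      eBetween G S S + eBetween G S T + eBetween G T S + eBetween G T T := by
  simp only [eBetween, Finset.sum_union h, Finset.sum_add_distrib]
  ring

lemma eBetween_eq_zero (G : SimpleGraph V) [DecidableRel G.Adj] {S T : Finset V}
    (h : ∀ u ∈ S, ∀ v ∈ T, ¬ G.Adj u v) : eBetween G S T = 0 := by
  apply Finset.sum_eq_zero
  intro u hu
  apply Finset.sum_eq_zero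
  intro v hv
  simp [h u hu v hv]

/-- **Theorem.** Every community of an optimal CPM partition (with resolution parameter
`γ > 0`) induces a connected subgraph. -/
theorem optimal_partition_communities_connected
    [Fintype V] [DecidableEq V] (G : SimpleGraph V) [DecidableRel G.Adj]
    (γ : ℝ) (hγ : 0 < γ)
    (Pstar : Finset (Finset V)) (hPstar : IsPartition Pstar)
    (hopt : ∀ P : Finset (Finset V), IsPartition P →
      cpmQuality G γ P ≤ cpmQuality G γ Pstar) :
    ∀ C ∈ Pstar, (G.induce (↑C : Set V)).Connected := by
  classical
  intro C hC
  by_contra hconn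
  obtain ⟨hne, huniq⟩ := hPstar
  have hCne : C.Nonempty := hne C hC
  have hnonempty : Nonempty ↑(↑C : Set V) := by
    obtain ⟨x, hx⟩ := hCne; exact ⟨⟨x, hx⟩⟩
  rw [SimpleGraph.connected_iff] at hconn
  push_neg at hconn
  have hpre : ¬ (G.induce (↑C : Set V)).Preconnected := fun h => (hconn h).1 hnonempty.some
  rw [SimpleGraph.Preconnected] at hpre
  push_neg at hpre
  obtain ⟨a, b, hab⟩ := hpre
  set S : Finset V :=
    C.filter (fun u => ∃ hu : u ∈ C, (G.induce (↑C : Set V)).Reachable a ⟨u, hu⟩) with hSdef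
  set T : Finset V := C \ S with hTdef
  have hSsub : S ⊆ C := Finset.filter_subset _ _
  have hTsub : T ⊆ C := Finset.sdiff_subset
  have hST : Disjoint S T := Finset.disjoint_sdiff
  have hUnion : S ∪ T = C := Finset.union_sdiff_of_subset hSsub
  have haC : (a : V) ∈ C := a.2
  have haS : (a : V) ∈ S := by
    refine Finset.mem_filter.mpr ⟨haC, haC, ?_⟩
    exact SimpleGraph.Reachable.refl a
  have hbC : (b : V) ∈ C := b.2
  have hbS : (b : V) ∉ S := by
    intro hb
    obtain ⟨-, hb', hr⟩ := Finset.mem_filter.mp hb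
    have : (⟨(b : V), hb'⟩ : ↑(↑C : Set V)) = b := Subtype.ext rfl
    rw [this] at hr
    exact hab hr
  have hbT : (b : V) ∈ T := Finset.mem_sdiff.mpr ⟨hbC, hbS⟩
  have hSne : S.Nonempty := ⟨_, haS⟩
  have hTne : T.Nonempty := ⟨_, hbT⟩
  -- no edges between S and T
  have hnoedge : ∀ u ∈ S, ∀ v ∈ T, ¬ G.Adj u v := by
    intro u hu v hv hadj
    obtain ⟨huC, hu', hr⟩ := Finset.mem_filter.mp hu
    obtain ⟨hvC, hvS⟩ := Finset.mem_sdiff.mp hv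
    apply hvS
    refine Finset.mem_filter.mpr ⟨hvC, hvC, ?_⟩
    exact hr.trans (SimpleGraph.Adj.reachable (by exact hadj))
  have hnoedge' : ∀ u ∈ T, ∀ v ∈ S, ¬ G.Adj u v := fun u hu v hv h =>
    hnoedge v hv u hu h.symm
  -- set inequalities
  have hSneT : S ≠ T := by
    intro h
    have haT : (a : V) ∈ T := by rw [← h]; exact haS
    exact (Finset.mem_sdiff.mp haT).2 haS
  have hSneC : S ≠ C := by
    intro h
    exact hbS (by rw [h]; exact hbC)
  have hTneC : T ≠ C := by
    intro h
    have haT : (a : V) ∈ T := by rw [h]; exact haC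
    exact (Finset.mem_sdiff.mp haT).2 haS
  have hSerase : S ∉ Pstar.erase C := by
    intro h
    have hSP : S ∈ Pstar := Finset.mem_of_mem_erase h
    exact hSneC ((huniq (a : V)).unique ⟨hSP, haS⟩ ⟨hC, haC⟩)
  have hTerase : T ∉ Pstar.erase C := by
    intro h
    have hTP : T ∈ Pstar := Finset.mem_of_mem_erase h
    exact hTneC ((huniq (b : V)).unique ⟨hTP, hbT⟩ ⟨hC, hbC⟩)
  have hSnotin : S ∉ insert T (Pstar.erase C) := by
    simp only [Finset.mem_insert]
    rintro (h | h)
    · exact hSneT h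
    · exact hSerase h
  -- the refined partition
  set P' : Finset (Finset V) := insert S (insert T (Pstar.erase C)) with hP'def
  have hP' : IsPartition P' := by
    constructor
    · intro D hD
      simp only [hP'def, Finset.mem_insert] at hD
      rcases hD with rfl | rfl | hD
      · exact hSne
      · exact hTne
      · exact hne D (Finset.mem_of_mem_erase hD)
    · intro v
      obtain ⟨D, ⟨hD, hvD⟩, hDuniq⟩ := huniq v
      by_cases hDC : D = C
      · subst hDC
        by_cases hvS : v ∈ S
        · refine ⟨S, ⟨Finset.mem_insert_self _ _, hvS⟩, ?_⟩
          rintro E ⟨hE, hvE⟩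
          simp only [hP'def, Finset.mem_insert] at hE
          rcases hE with rfl | rfl | hE
          · rfl
          · exact absurd hvE (Finset.disjoint_left.mp hST hvS)
          · exact absurd (hDuniq E ⟨Finset.mem_of_mem_erase hE, hvE⟩)
              (Finset.ne_of_mem_erase hE)
        · have hvT : v ∈ T := Finset.mem_sdiff.mpr ⟨hvD, hvS⟩
          refine ⟨T, ⟨Finset.mem_insert_of_mem (Finset.mem_insert_self _ _), hvT⟩, ?_⟩
          rintro E ⟨hE, hvE⟩
          simp only [hP'def, Finset.mem_insert] at hE
          rcases hE with rfl | rfl | hE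
          · exact absurd hvE hvS
          · rfl
          · exact absurd (hDuniq E ⟨Finset.mem_of_mem_erase hE, hvE⟩)
              (Finset.ne_of_mem_erase hE)
      · refine ⟨D, ⟨?_, hvD⟩, ?_⟩
        · exact Finset.mem_insert_of_mem (Finset.mem_insert_of_mem
            (Finset.mem_erase.mpr ⟨hDC, hD⟩))
        · rintro E ⟨hE, hvE⟩
          simp only [hP'def, Finset.mem_insert] at hE
          rcases hE with rfl | rfl | hE
          · exact absurd (hDuniq C ⟨hC, hSsub hvE⟩).symm hDC
          · exact absurd (hDuniq C ⟨hC, hTsub hvE⟩).symm hDC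
          · exact hDuniq E ⟨Finset.mem_of_mem_erase hE, hvE⟩
  -- quality comparison
  set f : Finset V → ℝ :=
    fun D => eBetween G D D / 2 - γ * (D.card : ℝ) * ((D.card : ℝ) - 1) / 2 with hfdef
  have hQ' : cpmQuality G γ P' = f S + f T + ∑ D ∈ Pstar.erase C, f D := by
    rw [hP'def, cpmQuality, Finset.sum_insert hSnotin, Finset.sum_insert hTerase]
    ring
  have hQ : cpmQuality G γ Pstar = f C + ∑ D ∈ Pstar.erase C, f D := by
    rw [cpmQuality, ← Finset.add_sum_erase _ _ hC]
  have hE : eBetween G C C = eBetween G S S + eBetween G T T := by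
    rw [← hUnion, eBetween_union_self G hST, eBetween_eq_zero G hnoedge,
      eBetween_eq_zero G hnoedge']
    ring
  have hcard : (C.card : ℝ) = (S.card : ℝ) + (T.card : ℝ) := by
    rw [← hUnion, Finset.card_union_of_disjoint hST]
    push_cast
    ring
  have hs1 : (1 : ℝ) ≤ (S.card : ℝ) := by
    exact_mod_cast Nat.one_le_iff_ne_zero.mpr (Finset.card_ne_zero_of_mem haS)
  have ht1 : (1 : ℝ) ≤ (T.card : ℝ) := by
    exact_mod_cast Nat.one_le_iff_ne_zero.mpr (Finset.card_ne_zero_of_mem hbT)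
  have hlt : f C < f S + f T := by
    simp only [hfdef]
    rw [hE, hcard]
    nlinarith [mul_pos hγ (mul_pos (lt_of_lt_of_le one_pos hs1)
      (lt_of_lt_of_le one_pos ht1))]
  have := hopt P' hP'
  rw [hQ, hQ'] at this
  linarith
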